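/- Let m : ℝ → ℝ be measurable with 0 < c ≤ m ≤ C, and let z = x + iy with y ≠ 0. Then ∂ω_m/∂y (z) = ∫_ℝ y/((x-t)² + y²) · m(t) dt = π P_m(z), where P_m is the Poisson transform of m(t)dt. In particular |∂ω_m/∂y(z)| is bounded above and below by positive constants depending only on c, C. -/

import Mathlib

open MeasureTheory Set

/-- `χ(t) = 1 - 1_{[-1,1]}(t)`. -/
noncomputable def chi (t : ℝ) : ℝ := if t ∈ Set.Icc (-1 : ℝ) 1 then 0 else 1

/-- The modified logarithmic potential `ω_m`. -/
noncomputable def omegaPot (m : ℝ → ℝ) (z : ℂ) : ℝ :=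
  ∫ t : ℝ, (Real.log ‖1 - z / (t : ℂ)‖ + chi t * z.re / t) * m t

/-- The Poisson transform of `m(t)dt`. -/
noncomputable def poissonT (m : ℝ → ℝ) (x y : ℝ) : ℝ :=
  (1 / Real.pi) * ∫ t : ℝ, y / ((x - t) ^ 2 + y ^ 2) * m t


lemma integrable_inv_sq_add (x : ℝ) {a : ℝ} (ha : a ≠ 0) :
    Integrable (fun t : ℝ => ((t - x) ^ 2 + a ^ 2)⁻¹) := by
  have h2 : Integrable (fun t : ℝ => (1 + ((t - x) / a) ^ 2)⁻¹) :=
    (integrable_inv_one_add_sq.comp_div ha).comp_sub_right x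
  have h3 := h2.const_mul ((a ^ 2)⁻¹)
  have he : (fun t : ℝ => ((t - x) ^ 2 + a ^ 2)⁻¹)
      = fun t : ℝ => (a ^ 2)⁻¹ * (1 + ((t - x) / a) ^ 2)⁻¹ := by
    funext t
    rw [← mul_inv]
    congr 1
    field_simp; ring
  rw [he]; exact h3

lemma integral_poisson_kernel (x : ℝ) {a : ℝ} (ha : a ≠ 0) :
    ∫ t : ℝ, a / ((x - t) ^ 2 + a ^ 2) = |a| / a * Real.pi := by
  have h1 : (fun t : ℝ => a / ((x - t) ^ 2 + a ^ 2)) =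
      fun t : ℝ => a⁻¹ * (fun u : ℝ => (1 + (u / a) ^ 2)⁻¹) (t - x) := by
    funext t
    simp only
    rw [eq_comm, eq_div_iff (by positivity)]
    field_simp; ring
  rw [h1, integral_const_mul a⁻¹,
    integral_sub_right_eq_self (fun u : ℝ => (1 + (u / a) ^ 2)⁻¹) x,
    Measure.integral_comp_div (fun u : ℝ => (1 + u ^ 2)⁻¹) a,
    integral_univ_inv_one_add_sq, smul_eq_mul]
  ring

lemma intervalIntegrable_log_abs (R : ℝ) (hR : 1 ≤ R) :
    IntervalIntegrable (fun t : ℝ => Real.log |t|) volume 0 R := by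
  have hg : IntervalIntegrable (fun t : ℝ => 2 * t ^ (-(1/2) : ℝ) + Real.log R)
      volume 0 R :=
    ((intervalIntegral.intervalIntegrable_rpow' (by norm_num)).const_mul 2).add intervalIntegrable_const
  refine hg.mono_fun ((Real.measurable_log.comp measurable_abs).aestronglyMeasurable) ?_
  rw [Filter.EventuallyLE, ae_restrict_iff' measurableSet_uIoc]
  refine Filter.Eventually.of_forall fun t ht => ?_
  rw [Set.uIoc_of_le (by linarith : (0:ℝ) ≤ R)] at ht
  obtain ⟨ht0, htR⟩ := ht
  have hu : (0:ℝ) < t ^ (-(1/2) : ℝ) := Real.rpow_pos_of_pos ht0 _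
  have hlogR : 0 ≤ Real.log R := Real.log_nonneg hR
  have key : abs (Real.log |t|) ≤ 2 * t ^ (-(1/2) : ℝ) + Real.log R := by
    rw [abs_of_pos ht0]
    rcases le_or_gt t 1 with h1 | h1
    · have hlt : Real.log t ≤ 0 := Real.log_nonpos ht0.le h1
      rw [abs_of_nonpos hlt]
      have hsq : (t ^ (-(1/2) : ℝ)) ^ 2 = t⁻¹ := by
        rw [← Real.rpow_natCast (t ^ (-(1/2):ℝ)) 2, ← Real.rpow_mul ht0.le]
        norm_num
        exact Real.rpow_neg_one t
      have h2 : -Real.log t = Real.log t⁻¹ := (Real.log_inv t).symm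
      have h3 : Real.log t⁻¹ = 2 * Real.log (t ^ (-(1/2) : ℝ)) := by
        rw [← hsq, Real.log_pow]
        push_cast; ring
      have h4 : Real.log (t ^ (-(1/2) : ℝ)) ≤ t ^ (-(1/2) : ℝ) := by
        calc Real.log (t ^ (-(1/2) : ℝ)) ≤ t ^ (-(1/2) : ℝ) - 1 :=
              Real.log_le_sub_one_of_pos hu
        _ ≤ _ := by linarith
      linarith
    · have : Real.log t ≤ Real.log R := Real.log_le_log ht0 htR
      rw [abs_of_nonneg (Real.log_nonneg h1.le)]
      linarith
  calc ‖Real.log |t|‖ = abs (Real.log |t|) := Real.norm_eq_abs _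
    _ ≤ 2 * t ^ (-(1/2) : ℝ) + Real.log R := key
    _ ≤ ‖2 * t ^ (-(1/2) : ℝ) + Real.log R‖ := le_abs_self _

lemma integrableOn_log_abs (R : ℝ) :
    IntegrableOn (fun t : ℝ => Real.log |t|) (Set.Icc (-R) R) := by
  set R' := max R 1 with hR'
  have hR1 : 1 ≤ R' := le_max_right _ _
  have h1 : IntervalIntegrable (fun t : ℝ => Real.log |t|) volume 0 R' :=
    intervalIntegrable_log_abs R' hR1
  have h2 : IntervalIntegrable (fun t : ℝ => Real.log |t|) volume (-R') 0 := by
    have := ((IntervalIntegrable.iff_comp_neg).mp h1)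
    simp only [abs_neg, neg_zero] at this
    exact this.symm
  have h3 : IntervalIntegrable (fun t : ℝ => Real.log |t|) volume (-R') R' :=
    h2.trans h1
  have h4 : IntegrableOn (fun t : ℝ => Real.log |t|) (Set.Icc (-R') R') := by
    rw [integrableOn_Icc_iff_integrableOn_Ioc]
    exact (intervalIntegrable_iff_integrableOn_Ioc_of_le (by linarith)).mp h3
  exact h4.mono_set (Set.Icc_subset_Icc (by simp [hR']) (le_max_left _ _))

lemma measurable_chi : Measurable chi :=
  Measurable.ite measurableSet_Icc measurable_const measurable_const


lemma integrable_omega_integrand (m : ℝ → ℝ) (C : ℝ) (hm : Measurable m)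
    (hb : ∀ t, ‖m t‖ ≤ C) (x : ℝ) {s : ℝ} (hs : s ≠ 0) :
    Integrable (fun t : ℝ =>
      (Real.log (‖1 - ((x : ℂ) + (s : ℂ) * Complex.I) / (t : ℂ)‖) +
        chi t * x / t) * m t) := by
  set z : ℂ := (x : ℂ) + (s : ℂ) * Complex.I with hz
  have hzim : z.im = s := by simp [hz]
  have hzero : ∀ t : ℝ, (t : ℂ) - z ≠ 0 := by
    intro t h
    apply hs
    have h2 := congrArg Complex.im h
    simp [hzim] at h2
    exact h2
  have habs_ne : ∀ t : ℝ, ‖(t : ℂ) - z‖ ≠ 0 := fun t =>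
    norm_ne_zero_iff.mpr (hzero t)
  have hmeasL : Measurable (fun t : ℝ =>
      Real.log (‖1 - z / (t : ℂ)‖) + chi t * x / t) := by
    apply Measurable.add
    · apply Real.measurable_log.comp
      apply continuous_norm.measurable.comp
      exact Measurable.sub measurable_const
        (measurable_const.div Complex.measurable_ofReal)
    · exact (measurable_chi.mul measurable_const).div measurable_id
  set B := ‖z‖ with hB
  have hB0 : 0 ≤ B := norm_nonneg z
  set R : ℝ := 2 * B + 2 with hRdef
  have hR1 : 1 < R := by linarith
  set A : Set ℝ := {t : ℝ | R < |t|} with hA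
  have measA : MeasurableSet A := measurableSet_lt measurable_const measurable_abs
  have h_tail : IntegrableOn
      (fun t : ℝ => Real.log (‖1 - z / (t : ℂ)‖) + chi t * x / t) A := by
    have hgint : Integrable (fun t : ℝ => 2 * B ^ 2 * (1 + t ^ 2)⁻¹) :=
      integrable_inv_one_add_sq.const_mul _
    refine Integrable.mono hgint.integrableOn hmeasL.aestronglyMeasurable.restrict ?_
    rw [ae_restrict_iff' measA]
    refine Filter.Eventually.of_forall fun t ht => ?_
    have htR : R < |t| := ht
    have ht1 : 1 < |t| := lt_trans hR1 htR
    have ht0 : t ≠ 0 := by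
      intro h; rw [h, abs_zero] at ht1; linarith
    have htC : (t : ℂ) ≠ 0 := Complex.ofReal_ne_zero.mpr ht0
    have hchi : chi t = 1 := by
      rw [chi, if_neg]
      intro hmem
      have : |t| ≤ 1 := abs_le.mpr ⟨hmem.1, hmem.2⟩
      linarith
    have hw : ‖z / (t : ℂ)‖ = B / |t| := by
      rw [norm_div, Complex.norm_real, Real.norm_eq_abs]
    have htpos : (0 : ℝ) < |t| := by linarith
    have hwhalf : ‖z / (t : ℂ)‖ ≤ 1 / 2 := by
      rw [hw, div_le_iff₀ htpos]; linarith
    have hwlt : ‖z / (t : ℂ)‖ < 1 := lt_of_le_of_lt hwhalf (by norm_num)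
    have hxt : ((z / (t : ℂ)).re) = x / t := by
      have hq : z / (t : ℂ) = ((x / t : ℝ) : ℂ) + ((s / t : ℝ) : ℂ) * Complex.I := by
        rw [hz]; push_cast; field_simp
      rw [hq]; simp
    have hre : Real.log (‖1 - z / (t : ℂ)‖)
        = (Complex.log (1 - z / (t : ℂ))).re := (Complex.log_re _).symm
    have hkey : ‖Real.log (‖1 - z / (t : ℂ)‖) + chi t * x / t‖
        ≤ B ^ 2 / t ^ 2 := by
      rw [hchi, one_mul, hre]
      have hcomb : (Complex.log (1 - z / (t : ℂ))).re + x / t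
          = (Complex.log (1 - z / (t : ℂ)) + z / (t : ℂ)).re := by
        rw [Complex.add_re, hxt]
      rw [hcomb, Real.norm_eq_abs]
      have hlog := Complex.norm_log_one_add_sub_self_le (z := -(z / (t : ℂ)))
        (by simpa using hwlt)
      have heq : Complex.log (1 + -(z / (t : ℂ))) - -(z / (t : ℂ))
          = Complex.log (1 - z / (t : ℂ)) + z / (t : ℂ) := by
        rw [← sub_eq_add_neg, sub_neg_eq_add]
      rw [heq] at hlog
      have hnn : ‖-(z / (t : ℂ))‖ = B / |t| := by
        rw [norm_neg, hw]
      rw [hnn] at hlog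
      have habsre : |(Complex.log (1 - z / (t : ℂ)) + z / (t : ℂ)).re|
          ≤ ‖Complex.log (1 - z / (t : ℂ)) + z / (t : ℂ)‖ :=
        Complex.abs_re_le_norm _
      have hnorm_abs : ‖Complex.log (1 - z / (t : ℂ)) + z / (t : ℂ)‖
          = ‖Complex.log (1 - z / (t : ℂ)) + z / (t : ℂ)‖ := rfl
      rw [hnorm_abs] at hlog
      have hBt : B / |t| ≤ 1 / 2 := by rw [hw] at hwhalf; exact hwhalf
      have hfrac : (1 - B / |t|)⁻¹ ≤ 2 := by
        rw [inv_le_comm₀ (by linarith) (by norm_num)]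
        linarith
      have hsq : (B / |t|) ^ 2 = B ^ 2 / t ^ 2 := by
        rw [div_pow, sq_abs]
      calc |(Complex.log (1 - z / (t : ℂ)) + z / (t : ℂ)).re|
          ≤ ‖Complex.log (1 - z / (t : ℂ)) + z / (t : ℂ)‖ := habsre
        _ ≤ (B / |t|) ^ 2 * (1 - B / |t|)⁻¹ / 2 := hlog
        _ ≤ (B / |t|) ^ 2 * 2 / 2 := by
            have h1 : (0:ℝ) ≤ (B / |t|) ^ 2 := sq_nonneg _
            gcongr
        _ = (B / |t|) ^ 2 := by ring
        _ = B ^ 2 / t ^ 2 := hsq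
    refine le_trans hkey ?_
    have ht2 : (1 : ℝ) ≤ t ^ 2 := by nlinarith [sq_abs t]
    have ht2pos : (0 : ℝ) < t ^ 2 := by linarith
    rw [Real.norm_eq_abs, abs_of_nonneg (by positivity)]
    rw [div_le_iff₀ ht2pos]
    have h12 : 1 + t ^ 2 ≤ 2 * t ^ 2 := by linarith
    rw [mul_assoc, mul_comm ((1 + t^2)⁻¹) (t^2), ← div_eq_mul_inv]
    have : (1:ℝ) ≤ t ^ 2 / (1 + t ^ 2) * 2 := by
      rw [div_mul_eq_mul_div, le_div_iff₀ (by positivity)]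
      linarith
    nlinarith [sq_nonneg B]
  have h_mid : IntegrableOn
      (fun t : ℝ => Real.log (‖1 - z / (t : ℂ)‖) + chi t * x / t)
      (Icc (-R) R) := by
    have h₁ : IntegrableOn (fun t : ℝ => Real.log (‖(t : ℂ) - z‖))
        (Icc (-R) R) := by
      apply Continuous.integrableOn_Icc
      apply Continuous.log
      · exact continuous_norm.comp (Complex.continuous_ofReal.sub continuous_const)
      · exact habs_ne
    have h₂ := integrableOn_log_abs R
    have h₃ : IntegrableOn (fun t : ℝ => chi t * x / t) (Icc (-R) R) := by
      have hconst : IntegrableOn (fun _ : ℝ => |x|) (Icc (-R) R) :=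
        (integrableOn_const_iff).mpr (Or.inr measure_Icc_lt_top)
      refine Integrable.mono hconst
        (((measurable_chi.mul measurable_const).div measurable_id).aestronglyMeasurable.restrict) ?_
      refine Filter.Eventually.of_forall fun t => ?_
      rw [Real.norm_eq_abs, Real.norm_eq_abs, abs_abs]
      by_cases hmem : t ∈ Set.Icc (-1 : ℝ) 1
      · rw [chi, if_pos hmem, zero_mul, zero_div, abs_zero]
        exact abs_nonneg x
      · have h1t : 1 ≤ |t| := by
          rw [Set.mem_Icc, not_and_or] at hmem
          rcases hmem with h | h
          · push_neg at h; rw [abs_of_neg (by linarith)]; linarith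
          · push_neg at h; rw [abs_of_pos (by linarith)]; linarith
        rw [chi, if_neg hmem, one_mul, abs_div]
        exact div_le_self (abs_nonneg x) h1t
    have hsum := (h₁.sub h₂).add h₃
    refine hsum.congr ?_
    have h0 : ∀ᵐ t ∂(volume.restrict (Icc (-R) R)), t ≠ 0 := by
      refine ae_restrict_of_ae ?_
      rw [ae_iff]
      have : {t : ℝ | ¬t ≠ 0} = {0} := by ext u; simp
      rw [this]
      exact Real.volume_singleton
    refine h0.mono fun t ht => ?_
    have htC : (t : ℂ) ≠ 0 := Complex.ofReal_ne_zero.mpr ht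
    have hq : (1 : ℂ) - z / (t : ℂ) = ((t : ℂ) - z) / (t : ℂ) := by field_simp
    simp only
    rw [hq, norm_div, Complex.norm_real, Real.norm_eq_abs,
      Real.log_div (habs_ne t) (abs_ne_zero.mpr ht)]
    simp only [Pi.add_apply, Pi.sub_apply]
  have hcover : Icc (-R) R ∪ A = Set.univ := by
    ext t
    simp only [Set.mem_union, Set.mem_Icc, Set.mem_setOf_eq, Set.mem_univ, iff_true, hA]
    rcases le_or_gt |t| R with h | h
    · left; exact ⟨by linarith [neg_abs_le t], by linarith [le_abs_self t]⟩
    · right; exact h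
  have hLint : Integrable
      (fun t : ℝ => Real.log (‖1 - z / (t : ℂ)‖) + chi t * x / t) := by
    rw [← integrableOn_univ, ← hcover]
    exact h_mid.union h_tail
  have hmul := hLint.bdd_mul hm.aestronglyMeasurable (Filter.Eventually.of_forall hb)
  exact hmul.congr (Filter.Eventually.of_forall fun t => mul_comm _ _)

theorem stmt3 (m : ℝ → ℝ) (c C : ℝ) (hc : 0 < c) (hm : Measurable m)
    (hlb : ∀ t, c ≤ m t) (hub : ∀ t, m t ≤ C) (x y : ℝ) (hy : y ≠ 0) :
    HasDerivAt (fun s : ℝ => omegaPot m ((x : ℂ) + (s : ℂ) * Complex.I))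
        (∫ t : ℝ, y / ((x - t) ^ 2 + y ^ 2) * m t) y ∧
      (∫ t : ℝ, y / ((x - t) ^ 2 + y ^ 2) * m t) = Real.pi * poissonT m x y ∧
      Real.pi * c ≤ |∫ t : ℝ, y / ((x - t) ^ 2 + y ^ 2) * m t| ∧
      |∫ t : ℝ, y / ((x - t) ^ 2 + y ^ 2) * m t| ≤ Real.pi * C := by
  have hC0 : 0 < C := lt_of_lt_of_le hc (le_trans (hlb 0) (hub 0))
  have hmb : ∀ t, ‖m t‖ ≤ C := fun t => by
    rw [Real.norm_eq_abs, abs_of_pos (lt_of_lt_of_le hc (hlb t))]; exact hub t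
  have hsq : ∀ t : ℝ, (x - t) ^ 2 = (t - x) ^ 2 := fun t => by ring
  have hk_int : Integrable (fun t : ℝ => y / ((x - t) ^ 2 + y ^ 2)) := by
    have h := (integrable_inv_sq_add x hy).const_mul y
    refine h.congr (Filter.Eventually.of_forall fun t => ?_)
    show y * ((t - x) ^ 2 + y ^ 2)⁻¹ = y / ((x - t) ^ 2 + y ^ 2)
    rw [hsq t, div_eq_mul_inv]
  have hkm_int : Integrable (fun t : ℝ => y / ((x - t) ^ 2 + y ^ 2) * m t) := by
    have h := hk_int.bdd_mul hm.aestronglyMeasurable (Filter.Eventually.of_forall hmb)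
    exact h.congr (Filter.Eventually.of_forall fun t => mul_comm _ _)
  have hkval : ∫ t : ℝ, y / ((x - t) ^ 2 + y ^ 2) = |y| / y * Real.pi :=
    integral_poisson_kernel x hy
  -- bounds
  have hbounds : Real.pi * c ≤ |∫ t : ℝ, y / ((x - t) ^ 2 + y ^ 2) * m t| ∧
      |∫ t : ℝ, y / ((x - t) ^ 2 + y ^ 2) * m t| ≤ Real.pi * C := by
    rcases hy.lt_or_gt with hyneg | hypos
    · have hkneg : ∀ t : ℝ, y / ((x - t) ^ 2 + y ^ 2) ≤ 0 := fun t => by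
        apply div_nonpos_of_nonpos_of_nonneg hyneg.le
        positivity
      have habsy : |y| / y = -1 := by
        rw [abs_of_neg hyneg]; field_simp
      have hupper : (∫ t : ℝ, y / ((x - t) ^ 2 + y ^ 2) * m t)
          ≤ ∫ t : ℝ, y / ((x - t) ^ 2 + y ^ 2) * c := by
        apply integral_mono hkm_int (hk_int.mul_const c)
        intro t
        exact mul_le_mul_of_nonpos_left (hlb t) (hkneg t)
      have hlower : (∫ t : ℝ, y / ((x - t) ^ 2 + y ^ 2) * C)
          ≤ ∫ t : ℝ, y / ((x - t) ^ 2 + y ^ 2) * m t := by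
        apply integral_mono (hk_int.mul_const C) hkm_int
        intro t
        exact mul_le_mul_of_nonpos_left (hub t) (hkneg t)
      rw [integral_mul_const, hkval, habsy] at hupper hlower
      have hIneg : (∫ t : ℝ, y / ((x - t) ^ 2 + y ^ 2) * m t) ≤ 0 := by nlinarith [Real.pi_pos]
      rw [abs_of_nonpos hIneg]
      constructor <;> nlinarith [Real.pi_pos]
    · have hknn : ∀ t : ℝ, 0 ≤ y / ((x - t) ^ 2 + y ^ 2) := fun t => by positivity
      have habsy : |y| / y = 1 := by
        rw [abs_of_pos hypos]; field_simp
      have hlower : (∫ t : ℝ, y / ((x - t) ^ 2 + y ^ 2) * c)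
          ≤ ∫ t : ℝ, y / ((x - t) ^ 2 + y ^ 2) * m t := by
        apply integral_mono (hk_int.mul_const c) hkm_int
        intro t
        exact mul_le_mul_of_nonneg_left (hlb t) (hknn t)
      have hupper : (∫ t : ℝ, y / ((x - t) ^ 2 + y ^ 2) * m t)
          ≤ ∫ t : ℝ, y / ((x - t) ^ 2 + y ^ 2) * C := by
        apply integral_mono hkm_int (hk_int.mul_const C)
        intro t
        exact mul_le_mul_of_nonneg_left (hub t) (hknn t)
      rw [integral_mul_const, hkval, habsy] at hupper hlower
      have hInn : 0 ≤ ∫ t : ℝ, y / ((x - t) ^ 2 + y ^ 2) * m t := by nlinarith [Real.pi_pos]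
      rw [abs_of_nonneg hInn]
      constructor <;> nlinarith [Real.pi_pos]
  refine ⟨?_, ?_, hbounds.1, hbounds.2⟩
  · -- the derivative
    set F : ℝ → ℝ → ℝ := fun s t =>
      (Real.log (‖1 - ((x : ℂ) + (s : ℂ) * Complex.I) / (t : ℂ)‖) +
        chi t * x / t) * m t with hF
    set F' : ℝ → ℝ → ℝ := fun s t => s / ((t - x) ^ 2 + s ^ 2) * m t with hF'
    have hfun : (fun s : ℝ => omegaPot m ((x : ℂ) + (s : ℂ) * Complex.I))
        = fun s : ℝ => ∫ t : ℝ, F s t := by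
      funext s
      have hre : ((x : ℂ) + (s : ℂ) * Complex.I).re = x := by simp
      simp only [omegaPot, hre, hF]
    have hy2 : (0 : ℝ) < |y| / 2 := by
      have := abs_pos.mpr hy; linarith
    have hF_meas : ∀ᶠ s in nhds y, AEStronglyMeasurable (F s) volume := by
      refine Filter.Eventually.of_forall fun s => ?_
      apply Measurable.aestronglyMeasurable
      apply Measurable.mul _ hm
      apply Measurable.add
      · apply Real.measurable_log.comp
        apply continuous_norm.measurable.comp
        exact Measurable.sub measurable_const
          (measurable_const.div Complex.measurable_ofReal)
      · exact (measurable_chi.mul measurable_const).div measurable_id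
    have hF_int : Integrable (F y) := integrable_omega_integrand m C hm hmb x hy
    have hF'_meas : AEStronglyMeasurable (F' y) volume := by
      apply Measurable.aestronglyMeasurable
      exact (measurable_const.div
        (((measurable_id.sub measurable_const).pow_const 2).add measurable_const)).mul hm
    set bound : ℝ → ℝ := fun t => 3 / 2 * |y| * C * ((t - x) ^ 2 + (y / 2) ^ 2)⁻¹
      with hbound_def
    have hbound_int : Integrable bound :=
      (integrable_inv_sq_add x (by simpa using hy : y / 2 ≠ 0)).const_mul _
    have hball : ∀ s ∈ Metric.ball y (|y| / 2), |y| / 2 ≤ |s| ∧ |s| ≤ 3 / 2 * |y| := by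
      intro s hs
      rw [Metric.mem_ball, Real.dist_eq] at hs
      constructor
      · have h1 : |y| - |s| ≤ |s - y| := by
          have := abs_sub_abs_le_abs_sub y s
          rwa [abs_sub_comm] at this
        linarith
      · have h2 : |s| - |y| ≤ |s - y| := abs_sub_abs_le_abs_sub s y
        linarith
    have h_bound : ∀ᵐ t : ℝ, ∀ s ∈ Metric.ball y (|y| / 2), ‖F' s t‖ ≤ bound t := by
      refine Filter.Eventually.of_forall fun t => fun s hs => ?_
      obtain ⟨hs1, hs2⟩ := hball s hs
      have hs0 : (0 : ℝ) < |s| := lt_of_lt_of_le hy2 hs1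
      have hden : (0 : ℝ) < (t - x) ^ 2 + (y / 2) ^ 2 := by positivity
      have hden2 : (0 : ℝ) < (t - x) ^ 2 + s ^ 2 := by
        have hs0' : s ≠ 0 := abs_pos.mp hs0
        positivity
      have hdenle : (t - x) ^ 2 + (y / 2) ^ 2 ≤ (t - x) ^ 2 + s ^ 2 := by
        have h1 : (y / 2) ^ 2 ≤ s ^ 2 := by
          have := sq_abs s
          have h2 : (|y| / 2) ^ 2 ≤ |s| ^ 2 := by nlinarith
          calc (y / 2) ^ 2 = (|y| / 2) ^ 2 := by rw [div_pow, div_pow, sq_abs]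
            _ ≤ |s| ^ 2 := h2
            _ = s ^ 2 := sq_abs s
        linarith
      rw [hF', Real.norm_eq_abs, abs_mul, abs_div, abs_of_pos hden2, hbound_def]
      have step1 : |s| / ((t - x) ^ 2 + s ^ 2) ≤ 3 / 2 * |y| / ((t - x) ^ 2 + (y / 2) ^ 2) :=
        div_le_div₀ (by positivity) hs2 hden hdenle
      calc |s| / ((t - x) ^ 2 + s ^ 2) * |m t|
          ≤ 3 / 2 * |y| / ((t - x) ^ 2 + (y / 2) ^ 2) * C := by
            refine mul_le_mul step1 ?_ (abs_nonneg _) (by positivity)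
            rw [← Real.norm_eq_abs]; exact hmb t
        _ = 3 / 2 * |y| * C * ((t - x) ^ 2 + (y / 2) ^ 2)⁻¹ := by
            field_simp
    have hae : ∀ᵐ t : ℝ, t ≠ 0 ∧ t ≠ x := by
      rw [ae_iff]
      have hset : {t : ℝ | ¬(t ≠ 0 ∧ t ≠ x)} = {0, x} := by
        ext u; simp [not_and_or, or_iff_not_imp_left]
      rw [hset]
      exact Set.Finite.measure_zero (Set.toFinite _) volume
    have h_diff : ∀ᵐ t : ℝ, ∀ s ∈ Metric.ball y (|y| / 2),
        HasDerivAt (fun u => F u t) (F' s t) s := by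
      refine hae.mono fun t ht s _ => ?_
      obtain ⟨ht0, htx⟩ := ht
      have htC : (t : ℂ) ≠ 0 := Complex.ofReal_ne_zero.mpr ht0
      have hdtx : (0 : ℝ) < (t - x) ^ 2 := by
        have : t - x ≠ 0 := sub_ne_zero.mpr htx
        positivity
      have hform : ∀ u : ℝ,
          Real.log (‖1 - ((x : ℂ) + (u : ℂ) * Complex.I) / (t : ℂ)‖)
          = 1 / 2 * Real.log ((t - x) ^ 2 + u ^ 2) - Real.log |t| := by
        intro u
        have hq : (1 : ℂ) - ((x : ℂ) + (u : ℂ) * Complex.I) / (t : ℂ)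
            = ((t : ℂ) - ((x : ℂ) + (u : ℂ) * Complex.I)) / (t : ℂ) := by
          field_simp
        have habs : ‖(t : ℂ) - ((x : ℂ) + (u : ℂ) * Complex.I)‖
            = Real.sqrt ((t - x) ^ 2 + u ^ 2) := by
          rw [Complex.norm_def, Complex.normSq_apply]
          congr 1
          simp [Complex.sub_re, Complex.sub_im]
          ring
        have hpos : (0 : ℝ) < (t - x) ^ 2 + u ^ 2 := by positivity
        rw [hq, norm_div, Complex.norm_real, Real.norm_eq_abs, habs,
          Real.log_div (by positivity) (abs_ne_zero.mpr ht0),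
          Real.log_sqrt hpos.le]
        ring
      have hfeq : (fun u : ℝ => F u t) = fun u : ℝ =>
          (1 / 2 * Real.log ((t - x) ^ 2 + u ^ 2) - Real.log |t| + chi t * x / t) * m t := by
        funext u
        rw [hF]
        simp only
        rw [hform u]
      rw [hfeq]
      have h1 : HasDerivAt (fun u : ℝ => (t - x) ^ 2 + u ^ 2) (2 * s) s := by
        simpa using (hasDerivAt_pow 2 s).const_add ((t - x) ^ 2)
      have hne : (t - x) ^ 2 + s ^ 2 ≠ 0 := by positivity
      have h2 := h1.log hne
      have h3 := (((h2.const_mul (1 / 2 : ℝ)).sub_const (Real.log |t|)).add_const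
        (chi t * x / t)).mul_const (m t)
      refine h3.congr_deriv ?_
      rw [hF']
      simp only
      field_simp
    have main := hasDerivAt_integral_of_dominated_loc_of_deriv_le (Metric.ball_mem_nhds y hy2) hF_meas hF_int
      hF'_meas h_bound hbound_int h_diff
    have hfinal : (∫ t : ℝ, F' y t) = ∫ t : ℝ, y / ((x - t) ^ 2 + y ^ 2) * m t := by
      apply integral_congr_ae
      refine Filter.Eventually.of_forall fun t => ?_
      rw [hF']
      simp only
      rw [hsq t]
    rw [hfun]
    rw [← hfinal]
    exact main.2
  · -- the Poisson transform identity
    rw [poissonT]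
    field_simp
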